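/- arXiv:1705.04653 — 3 statements merged into one kernel-verified Lean document; each statement's English description precedes it below -/
import Mathlib

section
/- Let A be a symmetric 2×2 positive definite matrix and B a symmetric 2×2 positive semidefinite matrix. Then B:A = 2·√(det A · det B) if and only if B = c·A⁻¹ for some scalar c ≥ 0. -/
open Matrix

def frob (B A : Matrix (Fin 2) (Fin 2) ℝ) : ℝ := (B * A).trace

open scoped MatrixOrder

theorem stmt3 (A B : Matrix (Fin 2) (Fin 2) ℝ)
    (hA : A.PosDef) (hB : B.PosSemidef) :
    frob B A = 2 * Real.sqrt (A.det * B.det) ↔ ∃ c : ℝ, 0 ≤ c ∧ B = c • A⁻¹ := by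
  have hAdet : 0 < A.det := hA.det_pos
  have hAunit : IsUnit A.det := (ne_of_gt hAdet).isUnit
  have hBdet : 0 ≤ B.det := by
    have hBd : B.det = (CFC.sqrt B).det * (CFC.sqrt B).det := by
      conv_lhs => rw [← CFC.sqrt_mul_sqrt_self B hB.nonneg]
      rw [det_mul]
    rw [hBd]; exact mul_self_nonneg _
  constructor
  · intro h
    set S := CFC.sqrt A with hSdef
    have hS : S.PosSemidef := (CFC.sqrt_nonneg A).posSemidef
    have hSherm : Sᴴ = S := hS.1
    have hSS : S * S = A := CFC.sqrt_mul_sqrt_self A hA.posSemidef.nonneg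
    set N := S * B * S with hNdef
    have hN : N.PosSemidef := by
      have := hB.mul_mul_conjTranspose_same S
      rwa [hSherm] at this
    have hNsym : N 0 1 = N 1 0 := by
      have := hN.1
      have := congrFun (congrFun this 0) 1
      simpa [conjTranspose_apply] using this.symm
    have htr : N.trace = frob B A := by
      rw [hNdef, frob, ← hSS]
      rw [mul_assoc, trace_mul_comm, mul_assoc]
    have hdet : N.det = A.det * B.det := by
      have hSdet : S.det * S.det = A.det := by rw [← det_mul, hSS]
      rw [hNdef, det_mul, det_mul, mul_comm S.det B.det, mul_assoc, hSdet,
        mul_comm]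
    have ht0 : 0 ≤ frob B A := by
      rw [h]; positivity
    have hsq : (frob B A) ^ 2 = 4 * (A.det * B.det) := by
      rw [h]
      rw [mul_pow, Real.sq_sqrt (by positivity)]
      ring
    have htr2 : N 0 0 + N 1 1 = frob B A := by
      rw [← htr, trace_fin_two]
    have hdet2 : N 0 0 * N 1 1 - N 0 1 * N 1 0 = A.det * B.det := by
      rw [← hdet, det_fin_two]
    have hkey : (N 0 0 - N 1 1) ^ 2 + 4 * (N 0 1) ^ 2 = 0 := by
      have := hsq
      rw [← htr2] at this
      rw [← hdet2] at this
      linear_combination this + 4 * N 0 1 * hNsym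
    have h1 : N 0 0 = N 1 1 := by nlinarith [sq_nonneg (N 0 0 - N 1 1), sq_nonneg (N 0 1)]
    have h2 : N 0 1 = 0 := by nlinarith [sq_nonneg (N 0 0 - N 1 1), sq_nonneg (N 0 1)]
    have h3 : N 1 0 = 0 := by rw [← hNsym, h2]
    set c : ℝ := frob B A / 2 with hc
    have hc0 : 0 ≤ c := by positivity
    have hNc : N = c • (1 : Matrix (Fin 2) (Fin 2) ℝ) := by
      ext i j
      fin_cases i <;> fin_cases j <;>
        simp [Matrix.smul_apply, Matrix.one_apply, h2, h3, hc] <;> linarith [htr2, h1]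
    -- invert S
    have hSdetne : S.det ≠ 0 := by
      intro h0
      have : S.det * S.det = A.det := by rw [← det_mul, hSS]
      rw [h0, mul_zero] at this
      exact (ne_of_gt hAdet) this.symm
    have hSinv : S⁻¹ * S = 1 := nonsing_inv_mul S hSdetne.isUnit
    have hSinv' : S * S⁻¹ = 1 := mul_nonsing_inv S hSdetne.isUnit
    refine ⟨c, hc0, ?_⟩
    have hB' : B = S⁻¹ * N * S⁻¹ := by
      rw [hNdef]
      rw [← mul_assoc, ← mul_assoc, hSinv, one_mul, mul_assoc, hSinv', mul_one]
    rw [hB', hNc]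
    rw [← hSS, Matrix.mul_inv_rev]
    simp [Matrix.mul_smul, Matrix.smul_mul]
  · rintro ⟨c, hc0, rfl⟩
    have hAinv : A⁻¹ * A = 1 := nonsing_inv_mul A hAunit
    have hfr : frob (c • A⁻¹) A = 2 * c := by
      rw [frob, Matrix.smul_mul, hAinv, trace_smul, trace_one]
      simp [Fintype.card_fin]
      ring
    have hdetB : (c • A⁻¹).det = c ^ 2 * A.det⁻¹ := by
      rw [det_smul, det_nonsing_inv]
      simp [Fintype.card_fin]
    rw [hfr, hdetB]
    have : A.det * (c ^ 2 * A.det⁻¹) = c ^ 2 := by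
      field_simp
    rw [this, Real.sqrt_sq hc0]
end

section
/- Let A be a symmetric 2×2 matrix and f ≥ 0. Then H(A,f) = 0 if and only if A is positive semidefinite and det A = (f/2)². -/
open Matrix

noncomputable section

def S1 : Set (Matrix (Fin 2) (Fin 2) ℝ) :=
  {B | B.PosSemidef ∧ B.trace = 1}

noncomputable def Hop (A : Matrix (Fin 2) (Fin 2) ℝ) (f : ℝ) : ℝ :=
  sSup ((fun B => -frob B A + f * Real.sqrt B.det) '' S1)

/-! ### Auxiliary lemmas -/

lemma herm_sym (A : Matrix (Fin 2) (Fin 2) ℝ) (h : A.IsHermitian) : A 1 0 = A 0 1 := by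
  have := congrFun (congrFun h 1) 0
  simp only [Matrix.conjTranspose_apply, star_trivial] at this
  exact this.symm

lemma psd_of_entries (M : Matrix (Fin 2) (Fin 2) ℝ) (h : M.IsHermitian)
    (h00 : 0 ≤ M 0 0) (h11 : 0 ≤ M 1 1) (hdet : M 0 1 * M 1 0 ≤ M 0 0 * M 1 1) :
    M.PosSemidef := by
  refine Matrix.posSemidef_iff_dotProduct_mulVec.2 ⟨h, fun x => ?_⟩
  have hb := herm_sym M h
  simp only [dotProduct, Matrix.mulVec, Fin.sum_univ_two, star_trivial]
  rw [hb] at hdet ⊢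
  rcases eq_or_lt_of_le h00 with h0 | h0
  · have hb0 : M 0 1 = 0 := by nlinarith [sq_nonneg (M 0 1)]
    rw [hb0, ← h0]
    nlinarith [mul_nonneg h11 (sq_nonneg (x 1))]
  · nlinarith [sq_nonneg (M 0 0 * x 0 + M 0 1 * x 1),
      mul_nonneg (sub_nonneg.2 hdet) (sq_nonneg (x 1)), h0]

lemma disc_of_quad (a b c : ℝ) (hq : ∀ u v : ℝ, 0 ≤ a * u ^ 2 + 2 * b * u * v + c * v ^ 2) :
    b ^ 2 ≤ a * c := by
  have h00 : 0 ≤ a := by have := hq 1 0; linarith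
  have h11 : 0 ≤ c := by have := hq 0 1; linarith
  by_contra hc
  push_neg at hc
  have h1 := hq (-b) a
  have h2 := hq c (-b)
  have h3 := hq b (-1)
  have ha0 : a = 0 := by nlinarith
  have hc0 : c = 0 := by nlinarith
  nlinarith

lemma entries_of_psd (M : Matrix (Fin 2) (Fin 2) ℝ) (h : M.PosSemidef) :
    0 ≤ M 0 0 ∧ 0 ≤ M 1 1 ∧ M 0 1 * M 1 0 ≤ M 0 0 * M 1 1 := by
  have hb := herm_sym M h.1
  have hq : ∀ u v : ℝ, 0 ≤ M 0 0 * u ^ 2 + 2 * M 0 1 * u * v + M 1 1 * v ^ 2 := by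
    intro u v
    have := (Matrix.posSemidef_iff_dotProduct_mulVec.1 h).2 ![u, v]
    simp [dotProduct, Matrix.mulVec, Fin.sum_univ_two, hb] at this
    nlinarith [this]
  have hd := disc_of_quad _ _ _ hq
  refine ⟨by have := hq 1 0; linarith, by have := hq 0 1; linarith, ?_⟩
  rw [hb]; nlinarith [hd]

lemma key_ineq (a b c p q r : ℝ) (ha : 0 ≤ a) (hc : 0 ≤ c) (hb : b ^ 2 ≤ a * c)
    (hp : 0 ≤ p) (hr : 0 ≤ r) (hq : q ^ 2 ≤ p * r) :
    2 * Real.sqrt ((a * c - b ^ 2) * (p * r - q ^ 2)) ≤ a * p + 2 * b * q + c * r := by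
  have hd1 : 0 ≤ a * c - b ^ 2 := by linarith
  have hd2 : 0 ≤ p * r - q ^ 2 := by linarith
  set u := Real.sqrt (a * c - b ^ 2) with hu_def
  set v := Real.sqrt (p * r - q ^ 2) with hv_def
  have hu : u ^ 2 = a * c - b ^ 2 := Real.sq_sqrt hd1
  have hv : v ^ 2 = p * r - q ^ 2 := Real.sq_sqrt hd2
  have hu0 : 0 ≤ u := Real.sqrt_nonneg _
  have hv0 : 0 ≤ v := Real.sqrt_nonneg _
  have hsplit : Real.sqrt ((a * c - b ^ 2) * (p * r - q ^ 2)) = u * v :=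
    Real.sqrt_mul hd1 _ ▸ rfl
  rw [hsplit]
  have cs : (|b| * |q| + u * v) ^ 2 ≤ a * c * (p * r) := by
    nlinarith [sq_nonneg (|b| * v - |q| * u), sq_abs b, sq_abs q,
      mul_nonneg (abs_nonneg b) (abs_nonneg q), mul_nonneg hu0 hv0]
  have h1 : |b| * |q| + u * v ≤ Real.sqrt (a * c * (p * r)) := by
    rw [Real.le_sqrt (by positivity) (by positivity)]
    exact cs
  have h2 : 2 * Real.sqrt (a * c * (p * r)) ≤ a * p + c * r := by
    have e1 : Real.sqrt (a * p) * Real.sqrt (c * r) = Real.sqrt (a * c * (p * r)) := by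
      rw [← Real.sqrt_mul (mul_nonneg ha hp)]
      ring_nf
    nlinarith [sq_nonneg (Real.sqrt (a * p) - Real.sqrt (c * r)),
      Real.sq_sqrt (mul_nonneg ha hp), Real.sq_sqrt (mul_nonneg hc hr), e1]
  have h3 : -(|b| * |q|) ≤ b * q := by
    rw [← abs_mul]; exact neg_abs_le _
  linarith

lemma frob_eq (B A : Matrix (Fin 2) (Fin 2) ℝ) :
    frob B A = B 0 0 * A 0 0 + B 0 1 * A 1 0 + B 1 0 * A 0 1 + B 1 1 * A 1 1 := by
  simp [frob, Matrix.trace_fin_two, Matrix.mul_apply, Fin.sum_univ_two]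
  ring

lemma mem_S1_iff (B : Matrix (Fin 2) (Fin 2) ℝ) :
    B ∈ S1 ↔ B.PosSemidef ∧ B 0 0 + B 1 1 = 1 := by
  unfold S1
  simp [Matrix.trace_fin_two]

lemma sym_herm (p q r : ℝ) : (!![p, q; q, r] : Matrix (Fin 2) (Fin 2) ℝ).IsHermitian := by
  show _ᴴ = _
  ext i j
  fin_cases i <;> fin_cases j <;> simp [Matrix.conjTranspose_apply]

lemma mem_S1_of (p q r : ℝ) (hp : 0 ≤ p) (hr : 0 ≤ r) (hq : q ^ 2 ≤ p * r)
    (htr : p + r = 1) : (!![p, q; q, r] : Matrix (Fin 2) (Fin 2) ℝ) ∈ S1 := by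
  rw [mem_S1_iff]
  refine ⟨psd_of_entries _ (sym_herm p q r) (by simpa using hp) (by simpa using hr) ?_, by simpa using htr⟩
  simp only [Matrix.cons_val', Matrix.cons_val_zero, Matrix.cons_val_one, Matrix.head_cons,
    Matrix.empty_val', Matrix.cons_val_fin_one, Matrix.head_fin_const, Matrix.of_apply]
  nlinarith [hq]

-- lower bound on frob for PSD matrices
lemma frob_lower (A B : Matrix (Fin 2) (Fin 2) ℝ) (hA : A.PosSemidef) (hB : B.PosSemidef) :
    2 * (Real.sqrt A.det * Real.sqrt B.det) ≤ frob B A := by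
  obtain ⟨ha, hc, hac⟩ := entries_of_psd A hA
  obtain ⟨hp, hr, hpr⟩ := entries_of_psd B hB
  have hba := herm_sym A hA.1
  have hbq := herm_sym B hB.1
  rw [hba] at hac
  rw [hbq] at hpr
  have hdA : A.det = A 0 0 * A 1 1 - A 0 1 ^ 2 := by
    rw [Matrix.det_fin_two, hba]; ring
  have hdB : B.det = B 0 0 * B 1 1 - B 0 1 ^ 2 := by
    rw [Matrix.det_fin_two, hbq]; ring
  have hsq : Real.sqrt A.det * Real.sqrt B.det = Real.sqrt (A.det * B.det) :=
    (Real.sqrt_mul (by rw [hdA]; nlinarith) _).symm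
  rw [hsq, frob_eq, hba, hbq, hdA, hdB]
  have := key_ineq (A 0 0) (A 0 1) (A 1 1) (B 0 0) (B 0 1) (B 1 1)
    ha hc (by nlinarith) hp hr (by nlinarith)
  calc 2 * Real.sqrt ((A 0 0 * A 1 1 - A 0 1 ^ 2) * (B 0 0 * B 1 1 - B 0 1 ^ 2))
      ≤ A 0 0 * B 0 0 + 2 * A 0 1 * B 0 1 + A 1 1 * B 1 1 := this
    _ = B 0 0 * A 0 0 + B 0 1 * A 0 1 + B 0 1 * A 0 1 + B 1 1 * A 1 1 := by ring

lemma bddS (A : Matrix (Fin 2) (Fin 2) ℝ) (f : ℝ) (hf : 0 ≤ f) :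
    BddAbove ((fun B => -frob B A + f * Real.sqrt B.det) '' S1) := by
  refine ⟨|A 0 0| + |A 1 0| + |A 0 1| + |A 1 1| + f / 2, ?_⟩
  rintro v ⟨B, hB, rfl⟩
  obtain ⟨hp, hr, hpr⟩ := entries_of_psd B hB.1
  have hbq := herm_sym B hB.1.1
  rw [hbq] at hpr
  have htr : B 0 0 + B 1 1 = 1 := by
    have := hB.2
    rwa [Matrix.trace_fin_two] at this
  have hq1 : B 0 1 ^ 2 ≤ 1 / 4 := by nlinarith [sq_nonneg (B 0 0 - B 1 1)]
  have hqabs : |B 0 1| ≤ 1 := by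
    rw [abs_le]; constructor <;> nlinarith [sq_nonneg (B 0 1 + 1), sq_nonneg (B 0 1 - 1)]
  have hfr : -(|A 0 0| + |A 1 0| + |A 0 1| + |A 1 1|) ≤ frob B A := by
    rw [frob_eq, hbq]
    have b1 : -(|A 0 0|) ≤ B 0 0 * A 0 0 := by nlinarith [neg_abs_le (A 0 0), le_abs_self (A 0 0), abs_nonneg (A 0 0)]
    have b2 : -(|A 1 0|) ≤ B 0 1 * A 1 0 := by nlinarith [neg_abs_le (A 1 0), le_abs_self (A 1 0), abs_nonneg (A 1 0), neg_abs_le (B 0 1), le_abs_self (B 0 1)]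
    have b3 : -(|A 0 1|) ≤ B 0 1 * A 0 1 := by nlinarith [neg_abs_le (A 0 1), le_abs_self (A 0 1), abs_nonneg (A 0 1), neg_abs_le (B 0 1), le_abs_self (B 0 1)]
    have b4 : -(|A 1 1|) ≤ B 1 1 * A 1 1 := by nlinarith [neg_abs_le (A 1 1), le_abs_self (A 1 1), abs_nonneg (A 1 1)]
    linarith
  have hdet : Real.sqrt B.det ≤ 1 / 2 := by
    rw [Real.sqrt_le_left (by norm_num)]
    rw [Matrix.det_fin_two, hbq]
    nlinarith [sq_nonneg (B 0 0 - B 1 1)]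
  have : f * Real.sqrt B.det ≤ f / 2 := by nlinarith [Real.sqrt_nonneg B.det]
  simp only
  linarith



lemma detBt_eq (a b c s t : ℝ) (hs : s ≠ 0) (h1 : s = a + c) (h2 : a * c = b ^ 2) :
    ((2*t-1)*a/s + (1-t)) * ((2*t-1)*c/s + (1-t)) - ((2*t-1)*b/s)^2 = t*(1-t) := by
  have e : ((2*t-1)*a/s + (1-t)) * ((2*t-1)*c/s + (1-t)) - ((2*t-1)*b/s)^2
      = (((2*t-1)*a + (1-t)*s) * ((2*t-1)*c + (1-t)*s) - ((2*t-1)*b)^2) / s^2 := by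
    field_simp
  have e2 : ((2*t-1)*a + (1-t)*s) * ((2*t-1)*c + (1-t)*s) - ((2*t-1)*b)^2 = t*(1-t)*s^2 := by
    linear_combination (2*t-1)^2 * h2 - (2*t-1)*(1-t)*s * h1
  rw [e, e2, mul_div_assoc, div_self (pow_ne_zero 2 hs), mul_one]

lemma trBt_eq (a c s t : ℝ) (hs : s ≠ 0) (h1 : s = a + c) :
    ((2*t-1)*a/s + (1-t)) + ((2*t-1)*c/s + (1-t)) = 1 := by
  have e : ((2*t-1)*a/s + (1-t)) + ((2*t-1)*c/s + (1-t))
      = ((2*t-1)*(a+c) + 2*(1-t)*s) / s := by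
    field_simp
    ring
  have e2 : (2*t-1)*(a+c) + 2*(1-t)*s = 1*s := by linear_combination -(2*t-1) * h1
  rw [e, e2, mul_div_assoc, div_self hs, mul_one]

lemma frobBt_eq (a b c s t : ℝ) (hs : s ≠ 0) (h1 : s = a + c) (h2 : a * c = b ^ 2) :
    ((2*t-1)*a/s + (1-t)) * a + 2 * ((2*t-1)*b/s) * b + ((2*t-1)*c/s + (1-t)) * c = t*s := by
  have e : ((2*t-1)*a/s + (1-t)) * a + 2 * ((2*t-1)*b/s) * b + ((2*t-1)*c/s + (1-t)) * c
      = ((2*t-1)*(a^2 + 2*b^2 + c^2) + (1-t)*s*(a+c)) / s := by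
    field_simp
    ring
  have e2 : (2*t-1)*(a^2 + 2*b^2 + c^2) + (1-t)*s*(a+c) = (t*s)*s := by
    linear_combination (-2*(2*t-1)) * h2 - ((2*t-1)*(a+c+s)+(1-t)*s) * h1
  rw [e, e2, mul_div_assoc, div_self hs, mul_one]


lemma shift_det_sq (a b c s D : ℝ) (hs : 0 < s) (hs_def : s = a + c) (hD : D = a * c - b ^ 2) :
    b ^ 2 ≤ (a - D/s) * (c - D/s) := by
  have hsne : s ≠ 0 := ne_of_gt hs
  have e : (a - D/s) * (c - D/s) - b^2 = (D/s)^2 := by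
    have : a + c ≠ 0 := by rw [← hs_def]; exact hsne
    rw [hD, hs_def]
    field_simp
    ring
  nlinarith [sq_nonneg (D/s)]

set_option maxHeartbeats 4000000 in
theorem stmt7 (A : Matrix (Fin 2) (Fin 2) ℝ) (hA : A.IsHermitian) (f : ℝ) (hf : 0 ≤ f) :
    Hop A f = 0 ↔ A.PosSemidef ∧ A.det = (f / 2) ^ 2 := by
  have hba : A 1 0 = A 0 1 := herm_sym A hA
  set g : Matrix (Fin 2) (Fin 2) ℝ → ℝ := fun B => -frob B A + f * Real.sqrt B.det with hg
  have hhalf : (!![(1:ℝ)/2, 0; 0, 1/2] : Matrix (Fin 2) (Fin 2) ℝ) ∈ S1 :=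
    mem_S1_of _ _ _ (by norm_num) (by norm_num) (by norm_num) (by norm_num)
  have hne : (g '' S1).Nonempty := ⟨_, Set.mem_image_of_mem _ hhalf⟩
  have hbdd : BddAbove (g '' S1) := bddS A f hf
  have hHop : Hop A f = sSup (g '' S1) := rfl
  have hdetA : A.det = A 0 0 * A 1 1 - A 0 1 ^ 2 := by
    rw [Matrix.det_fin_two, hba]; ring
  have hgval : ∀ p q r : ℝ, g !![p, q; q, r] =
      -(p * A 0 0 + 2 * q * A 0 1 + r * A 1 1) + f * Real.sqrt (p * r - q ^ 2) := by
    intro p q r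
    rw [hg]
    simp only [frob_eq, hba, Matrix.det_fin_two_of]
    simp only [Matrix.cons_val', Matrix.cons_val_zero, Matrix.cons_val_one, Matrix.head_cons,
      Matrix.empty_val', Matrix.cons_val_fin_one, Matrix.head_fin_const, Matrix.of_apply]
    ring_nf
  -- membership of the canonical witness B* (for any s = trace A > 0)
  have hBstar_mem : ∀ s : ℝ, 0 < s → s = A 0 0 + A 1 1 → 0 ≤ A 0 0 → 0 ≤ A 1 1 →
      A 0 1 * A 0 1 ≤ A 0 0 * A 1 1 →
      (!![A 1 1/s, -(A 0 1)/s; -(A 0 1)/s, A 0 0/s] : Matrix (Fin 2) (Fin 2) ℝ) ∈ S1 := by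
    intro s hs hs_def ha0 hc0 hacb
    apply mem_S1_of
    · exact div_nonneg hc0 hs.le
    · exact div_nonneg ha0 hs.le
    · have e1 : (-(A 0 1)/s)^2 = A 0 1 * A 0 1 / s^2 := by ring
      have e2 : A 1 1/s * (A 0 0/s) = A 0 0 * A 1 1 / s^2 := by ring
      rw [e1, e2]
      have hs2 : (0:ℝ) < s ^ 2 := by positivity
      exact div_le_div_of_nonneg_right hacb hs2.le |>.trans_eq rfl
    · field_simp
      linarith [hs_def]
  -- value of g at B*
  have hBstar_val : ∀ s : ℝ, 0 < s → 0 ≤ A.det →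
      g !![A 1 1/s, -(A 0 1)/s; -(A 0 1)/s, A 0 0/s]
        = -(2 * A.det / s) + f * (Real.sqrt A.det / s) := by
    intro s hs hd0
    rw [hgval]
    have edet : A 1 1/s * (A 0 0/s) - (-(A 0 1)/s) ^ 2 = A.det / s ^ 2 := by
      rw [hdetA]; field_simp
    have efr : A 1 1/s * A 0 0 + 2 * (-(A 0 1)/s) * A 0 1 + A 0 0/s * A 1 1 =
        2 * A.det / s := by
      rw [hdetA]; field_simp; ring
    rw [edet, efr, Real.sqrt_div hd0, Real.sqrt_sq hs.le]
  constructor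
  · -- forward direction
    intro hsup
    have hub : ∀ B ∈ S1, g B ≤ 0 := by
      intro B hB
      have := le_csSup hbdd (Set.mem_image_of_mem g hB)
      rwa [← hHop, hsup] at this
    -- Step 1 : A is positive semidefinite
    have hquad : ∀ u v : ℝ, 0 ≤ A 0 0 * u ^ 2 + 2 * A 0 1 * u * v + A 1 1 * v ^ 2 := by
      intro u v
      rcases eq_or_ne (u ^ 2 + v ^ 2) 0 with hn | hn
      · have hu : u = 0 := by nlinarith [sq_nonneg u, sq_nonneg v]
        have hv : v = 0 := by nlinarith [sq_nonneg u, sq_nonneg v]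
        simp [hu, hv]
      · have hn' : 0 < u ^ 2 + v ^ 2 := lt_of_le_of_ne (by positivity) (Ne.symm hn)
        obtain ⟨n, hn_def⟩ : ∃ x : ℝ, x = u ^ 2 + v ^ 2 := ⟨_, rfl⟩
        rw [← hn_def] at hn'
        have hBmem : (!![u^2/n, u*v/n; u*v/n, v^2/n] : Matrix (Fin 2) (Fin 2) ℝ) ∈ S1 := by
          apply mem_S1_of
          · exact div_nonneg (sq_nonneg u) hn'.le
          · exact div_nonneg (sq_nonneg v) hn'.le
          · exact le_of_eq (by ring)
          · field_simp
            linarith [hn_def, sq_nonneg u, sq_nonneg v]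
        have hval := hub _ hBmem
        rw [hgval] at hval
        have e0 : u ^ 2 / n * (v ^ 2 / n) - (u * v / n) ^ 2 = 0 := by ring
        rw [e0, Real.sqrt_zero, mul_zero, add_zero, neg_nonpos] at hval
        have e1 : u ^ 2 / n * A 0 0 + 2 * (u * v / n) * A 0 1 + v ^ 2 / n * A 1 1 =
            (A 0 0 * u ^ 2 + 2 * A 0 1 * u * v + A 1 1 * v ^ 2) / n := by ring
        rw [e1] at hval
        simpa using (le_div_iff₀ hn').1 hval
    have hApsd : A.PosSemidef := by
      refine psd_of_entries A hA ?_ ?_ ?_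
      · have := hquad 1 0; linarith
      · have := hquad 0 1; linarith
      · rw [hba]; nlinarith [disc_of_quad _ _ _ hquad]
    refine ⟨hApsd, ?_⟩
    obtain ⟨ha0, hc0, hacb⟩ := entries_of_psd A hApsd
    rw [hba] at hacb
    have hd0 : 0 ≤ A.det := by rw [hdetA]; nlinarith
    rcases eq_or_lt_of_le (add_nonneg ha0 hc0) with hs | hspos
    · -- trace zero: A = 0 and f = 0
      have ha : A 0 0 = 0 := by linarith
      have hc : A 1 1 = 0 := by linarith
      have hb : A 0 1 = 0 := by nlinarith
      have hval := hub _ hhalf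
      rw [hgval, ha, hc, hb] at hval
      have : Real.sqrt ((1:ℝ)/2 * (1/2) - 0 ^ 2) = 1/2 := by
        rw [show (1:ℝ)/2 * (1/2) - 0 ^ 2 = (1/2)^2 by norm_num, Real.sqrt_sq (by norm_num)]
      rw [this] at hval
      have hf0 : f = 0 := by linarith
      rw [hdetA, ha, hc, hb, hf0]; norm_num
    · obtain ⟨s, hs_def⟩ : ∃ x : ℝ, x = A 0 0 + A 1 1 := ⟨_, rfl⟩
      have hs : 0 < s := hs_def ▸ hspos
      have hvs := hub _ (hBstar_mem s hs hs_def ha0 hc0 hacb)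
      rw [hBstar_val s hs hd0] at hvs
      have ineq1 : f * Real.sqrt A.det ≤ 2 * A.det := by
        have e : -(2 * A.det / s) + f * (Real.sqrt A.det / s)
            = (f * Real.sqrt A.det - 2 * A.det) / s := by
          ring
        rw [e] at hvs
        rcases div_nonpos_iff.mp hvs with ⟨h1, h2⟩ | ⟨h1, h2⟩ <;> linarith
      rcases eq_or_lt_of_le hd0 with hd | hd
      · -- det A = 0 : must show f = 0
        by_contra hne'
        have hfpos : 0 < f := by
          rcases eq_or_lt_of_le hf with h | h
          · exfalso; apply hne'; rw [← hd, ← h]; norm_num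
          · exact h
        have hfs2 : 0 < f ^ 2 + s ^ 2 := by nlinarith [mul_pos hfpos hfpos, sq_nonneg s]
        obtain ⟨t, ht_def⟩ : ∃ x : ℝ, x = f ^ 2 / (2 * (f ^ 2 + s ^ 2)) := ⟨_, rfl⟩
        have htpos : 0 < t := by
          rw [ht_def]
          exact div_pos (by nlinarith [mul_pos hfpos hfpos]) (by linarith)
        have hthalf : t < 1 / 2 := by
          rw [ht_def, div_lt_iff₀ (by linarith)]
          nlinarith [mul_pos hs hs]
        have hacb' : A 0 0 * A 1 1 = A 0 1 ^ 2 := by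
          rw [hdetA] at hd; linarith
        obtain ⟨p, hp_def⟩ : ∃ x : ℝ, x = (2*t-1) * A 0 0 / s + (1-t) := ⟨_, rfl⟩
        obtain ⟨q, hq_def⟩ : ∃ x : ℝ, x = (2*t-1) * A 0 1 / s := ⟨_, rfl⟩
        obtain ⟨r, hr_def⟩ : ∃ x : ℝ, x = (2*t-1) * A 1 1 / s + (1-t) := ⟨_, rfl⟩
        have hpt : t ≤ p := by
          rw [hp_def, ← sub_nonneg]
          have h2 : (2*t-1) * A 0 0 / s + (1-t) - t = (2*t-1) * (A 0 0 - s) / s := by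
            field_simp; ring
          rw [h2]
          apply div_nonneg _ hs.le
          have h3 : A 0 0 - s ≤ 0 := by rw [hs_def]; linarith
          have e3 : (2*t-1) * (A 0 0 - s) = (1-2*t) * (s - A 0 0) := by ring
          rw [e3]
          exact mul_nonneg (by linarith) (by linarith)
        have hrt : t ≤ r := by
          rw [hr_def, ← sub_nonneg]
          have h2 : (2*t-1) * A 1 1 / s + (1-t) - t = (2*t-1) * (A 1 1 - s) / s := by
            field_simp; ring
          rw [h2]
          apply div_nonneg _ hs.le
          have h3 : A 1 1 - s ≤ 0 := by rw [hs_def]; linarith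
          have e3 : (2*t-1) * (A 1 1 - s) = (1-2*t) * (s - A 1 1) := by ring
          rw [e3]
          exact mul_nonneg (by linarith) (by linarith)
        have hdetBt : p * r - q ^ 2 = t * (1 - t) := by
          rw [hp_def, hq_def, hr_def]
          exact detBt_eq _ _ _ _ _ (ne_of_gt hs) hs_def hacb'
        have htr : p + r = 1 := by
          rw [hp_def, hr_def]
          exact trBt_eq _ _ _ _ (ne_of_gt hs) hs_def
        have hBt : (!![p, q; q, r] : Matrix (Fin 2) (Fin 2) ℝ) ∈ S1 := by
          apply mem_S1_of _ _ _ (le_trans htpos.le hpt) (le_trans htpos.le hrt) _ htr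
          nlinarith [hdetBt, mul_nonneg (le_trans htpos.le hpt) (le_trans htpos.le hrt), htpos, hthalf]
        have hvt := hub _ hBt
        rw [hgval, hdetBt] at hvt
        have efrt : p * A 0 0 + 2 * q * A 0 1 + r * A 1 1 = t * s := by
          rw [hp_def, hq_def, hr_def]
          exact frobBt_eq _ _ _ _ _ (ne_of_gt hs) hs_def hacb'
        rw [efrt] at hvt
        have hsq2 : f ^ 2 * (t * (1 - t)) ≤ (t * s) ^ 2 := by
          have h1 : f * Real.sqrt (t * (1-t)) ≤ t * s := by linarith
          have h2 : 0 ≤ f * Real.sqrt (t * (1-t)) := by positivity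
          have h3 := mul_self_le_mul_self h2 h1
          calc f ^ 2 * (t * (1 - t)) = (f * Real.sqrt (t*(1-t))) * (f * Real.sqrt (t*(1-t))) := by
                rw [show (f * Real.sqrt (t*(1-t))) * (f * Real.sqrt (t*(1-t)))
                    = f^2 * (Real.sqrt (t*(1-t)) * Real.sqrt (t*(1-t))) by ring,
                  Real.mul_self_sqrt (by nlinarith)]
            _ ≤ (t*s) * (t*s) := h3
            _ = (t*s)^2 := by ring
        have hkey : f ^ 2 * (1 - t) ≤ t * s ^ 2 := by
          nlinarith [hsq2, htpos]
        have e : t * (2 * (f ^ 2 + s ^ 2)) = f ^ 2 := by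
          rw [ht_def]; field_simp
        nlinarith [hkey, e, hfpos, hs, sq_nonneg f, sq_nonneg s,
          mul_pos hfpos hfpos, mul_pos hs hs]
      · -- det A > 0 : show f^2 = 4 det A
        have hfle : f ^ 2 ≤ 4 * A.det := by
          have hsd : 0 < Real.sqrt A.det := Real.sqrt_pos.2 hd
          have hfd : f ≤ 2 * Real.sqrt A.det := by
            rw [← mul_le_mul_iff_of_pos_right hsd]
            calc f * Real.sqrt A.det ≤ 2 * A.det := ineq1
              _ = 2 * Real.sqrt A.det * Real.sqrt A.det := by
                  rw [mul_assoc, Real.mul_self_sqrt hd0]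
          nlinarith [Real.sq_sqrt hd0, Real.sqrt_nonneg A.det]
        have hfge : 4 * A.det ≤ f ^ 2 := by
          by_contra hcon
          push_neg at hcon
          have hsd : 0 < Real.sqrt A.det := Real.sqrt_pos.2 hd
          obtain ⟨k, hk_def⟩ : ∃ x : ℝ, x = f / (2 * Real.sqrt A.det) := ⟨_, rfl⟩
          have hk0 : 0 ≤ k := by
            rw [hk_def]; exact div_nonneg hf (by linarith)
          have hk1 : k < 1 := by
            rw [hk_def, div_lt_one (by linarith)]
            nlinarith [Real.sq_sqrt hd0, Real.sqrt_nonneg A.det]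
          have hall : ∀ v ∈ g '' S1, v ≤ -((1 - k) * (A.det / s)) := by
            rintro v ⟨B, hB, rfl⟩
            obtain ⟨hbp, hbr, hbpr⟩ := entries_of_psd B hB.1
            have hbq := herm_sym B hB.1.1
            rw [hbq] at hbpr
            have hF1 : 2 * (Real.sqrt A.det * Real.sqrt B.det) ≤ frob B A :=
              frob_lower A B hApsd hB.1
            have hdB0 : 0 ≤ B.det := by
              rw [Matrix.det_fin_two, hbq]; nlinarith
            have hF2 : A.det / s ≤ frob B A := by
              have htrB : B 0 0 + B 1 1 = 1 := by
                have := hB.2; rwa [Matrix.trace_fin_two] at this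
              have ha' : 0 ≤ A 0 0 - A.det / s := by
                rw [sub_nonneg, div_le_iff₀ hs]
                rw [hdetA]; nlinarith [sq_nonneg (A 0 1), sq_nonneg (A 0 0), hs_def]
              have hc' : 0 ≤ A 1 1 - A.det / s := by
                rw [sub_nonneg, div_le_iff₀ hs]
                rw [hdetA]; nlinarith [sq_nonneg (A 0 1), sq_nonneg (A 1 1), hs_def]
              have hb' : A 0 1 ^ 2 ≤ (A 0 0 - A.det / s) * (A 1 1 - A.det / s) :=
                shift_det_sq _ _ _ _ _ hs hs_def hdetA
              have hki := key_ineq (A 0 0 - A.det / s) (A 0 1) (A 1 1 - A.det / s)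
                (B 0 0) (B 0 1) (B 1 1) ha' hc' hb' hbp hbr (by nlinarith)
              have hge0 : 0 ≤ (A 0 0 - A.det / s) * B 0 0 + 2 * A 0 1 * B 0 1
                  + (A 1 1 - A.det / s) * B 1 1 :=
                le_trans (by positivity) hki
              rw [frob_eq, hba, hbq]
              nlinarith [hge0]
            have hfs : f * Real.sqrt B.det = k * (2 * (Real.sqrt A.det * Real.sqrt B.det)) := by
              rw [hk_def]
              field_simp
            have hF0 : 0 ≤ frob B A := le_trans (div_nonneg hd0 hs.le) hF2
            calc -frob B A + f * Real.sqrt B.det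
                = -frob B A + k * (2 * (Real.sqrt A.det * Real.sqrt B.det)) := by rw [hfs]
              _ ≤ -frob B A + k * frob B A := by nlinarith [hF1, hk0]
              _ = -((1 - k) * frob B A) := by ring
              _ ≤ -((1 - k) * (A.det / s)) := by nlinarith [hF2, hk1]
          have hle := csSup_le hne hall
          rw [← hHop, hsup] at hle
          have : 0 < (1 - k) * (A.det / s) := by
            apply mul_pos (by linarith) (div_pos hd hs)
          linarith
        rw [show ((f/2)^2 : ℝ) = f^2/4 by ring]
        linarith
  · -- reverse direction
    rintro ⟨hApsd, hdet⟩
    obtain ⟨ha0, hc0, hacb⟩ := entries_of_psd A hApsd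
    rw [hba] at hacb
    have hd0 : 0 ≤ A.det := by rw [hdetA]; nlinarith
    have hsqd : Real.sqrt A.det = f / 2 := by
      rw [hdet, Real.sqrt_sq (by positivity)]
    have hub : ∀ v ∈ g '' S1, v ≤ 0 := by
      rintro v ⟨B, hB, rfl⟩
      have hF1 : 2 * (Real.sqrt A.det * Real.sqrt B.det) ≤ frob B A :=
        frob_lower A B hApsd hB.1
      rw [hsqd] at hF1
      show -frob B A + f * Real.sqrt B.det ≤ 0
      nlinarith [hF1]
    have hmem : (0:ℝ) ∈ g '' S1 := by
      rcases eq_or_lt_of_le (add_nonneg ha0 hc0) with hs | hspos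
      · have ha : A 0 0 = 0 := by linarith
        have hc : A 1 1 = 0 := by linarith
        have hb : A 0 1 = 0 := by nlinarith
        have hf0 : f = 0 := by
          have hz : A.det = 0 := by rw [hdetA, ha, hc, hb]; ring
          rw [hz] at hdet
          nlinarith [hdet]
        refine ⟨_, hhalf, ?_⟩
        rw [hgval, ha, hc, hb, hf0]
        norm_num
      · obtain ⟨s, hs_def⟩ : ∃ x : ℝ, x = A 0 0 + A 1 1 := ⟨_, rfl⟩
        have hs : 0 < s := hs_def ▸ hspos
        refine ⟨_, hBstar_mem s hs hs_def ha0 hc0 hacb, ?_⟩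
        rw [hBstar_val s hs hd0, hsqd, hdet]
        field_simp
        ring
    rw [hHop]
    exact le_antisymm (csSup_le hne hub) (le_csSup hbdd hmem)
end
end

section
/- Let u: Ω → ℝ be twice continuously differentiable on an open set Ω ⊂ ℝ², and let f: Ω → ℝ be nonnegative. Then u satisfies H(D²u(x), f(x)) = 0 for all x ∈ Ω if and only if D²u(x) is positive semidefinite and det D²u(x) = (f(x)/2)² for all x ∈ Ω. -/
open Matrix

noncomputable section

noncomputable def HessWithin (u : (Fin 2 → ℝ) → ℝ) (Ω : Set (Fin 2 → ℝ))
    (x : Fin 2 → ℝ) : Matrix (Fin 2) (Fin 2) ℝ :=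
  fun i j => iteratedFDerivWithin ℝ 2 u Ω x ![Pi.single i 1, Pi.single j 1]

/-! ### Auxiliary lemmas -/

lemma psd2 (A : Matrix (Fin 2) (Fin 2) ℝ) :
    A.PosSemidef ↔ A 1 0 = A 0 1 ∧ 0 ≤ A 0 0 ∧ 0 ≤ A 1 1 ∧ (A 0 1)^2 ≤ A 0 0 * A 1 1 := by
  constructor
  · intro hA
    obtain ⟨hh, hq⟩ := posSemidef_iff_dotProduct_mulVec.mp hA
    have hsym : A 1 0 = A 0 1 := by
      have := congrFun (congrFun hh 0) 1
      simpa [conjTranspose_apply] using this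
    refine ⟨hsym, ?_, ?_, ?_⟩
    · simpa [dotProduct, mulVec, Fin.sum_univ_two] using hq ![1, 0]
    · simpa [dotProduct, mulVec, Fin.sum_univ_two] using hq ![0, 1]
    · have key : ∀ t : ℝ, 0 ≤ A 0 0 * (t * t) + (2 * A 0 1) * t + A 1 1 := by
        intro t
        have := hq ![t, 1]
        simp [dotProduct, mulVec, Fin.sum_univ_two, hsym] at this
        nlinarith [this]
      have := discrim_le_zero key
      simp only [discrim] at this
      nlinarith [this]
  · rintro ⟨hsym, ha, hc, hb⟩
    refine posSemidef_iff_dotProduct_mulVec.mpr ⟨?_, ?_⟩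
    · ext i j
      fin_cases i <;> fin_cases j <;> simp [conjTranspose_apply, hsym]
    · intro x
      have hx : (star x) ⬝ᵥ (A *ᵥ x) = A 0 0 * (x 0)^2 + 2 * A 0 1 * (x 0 * x 1) + A 1 1 * (x 1)^2 := by
        simp [dotProduct, mulVec, Fin.sum_univ_two, hsym]; ring
      rw [hx]
      rcases eq_or_lt_of_le ha with h | h
      · have hb0 : A 0 1 = 0 := by nlinarith [sq_nonneg (A 0 1)]
        rw [hb0, ← h]; simp; positivity
      · nlinarith [sq_nonneg (A 0 0 * x 0 + A 0 1 * x 1), mul_nonneg (sub_nonneg.2 hb) (sq_nonneg (x 1))]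

lemma det2 (A : Matrix (Fin 2) (Fin 2) ℝ) : A.det = A 0 0 * A 1 1 - A 0 1 * A 1 0 :=
  Matrix.det_fin_two A

lemma trace2 (A : Matrix (Fin 2) (Fin 2) ℝ) : A.trace = A 0 0 + A 1 1 :=
  Matrix.trace_fin_two A

lemma det_nonneg2 {A : Matrix (Fin 2) (Fin 2) ℝ} (hA : A.PosSemidef) : 0 ≤ A.det := by
  obtain ⟨hs, h0, h1, hb⟩ := (psd2 _).mp hA
  rw [det2, hs]; nlinarith

lemma frob_key (A B : Matrix (Fin 2) (Fin 2) ℝ) (hA : A.PosSemidef) (hB : B.PosSemidef) :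
    0 ≤ frob B A ∧ 4 * (A.det * B.det) ≤ (frob B A)^2 := by
  obtain ⟨L, rfl⟩ : ∃ L : Matrix (Fin 2) (Fin 2) ℝ, B = Lᴴ * L := by
    open scoped MatrixOrder in exact CStarAlgebra.nonneg_iff_eq_star_mul_self.mp hB.nonneg
  have hC : (L * A * Lᴴ).PosSemidef := hA.mul_mul_conjTranspose_same L
  have htr : frob (Lᴴ * L) A = (L * A * Lᴴ).trace := (Matrix.trace_mul_cycle L A Lᴴ).symm
  have hdet : A.det * (Lᴴ * L).det = (L * A * Lᴴ).det := by
    have : (Lᴴ).det = L.det := by simp [Matrix.det_conjTranspose]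
    rw [Matrix.det_mul, Matrix.det_mul, Matrix.det_mul, this]; ring
  obtain ⟨hs, h0, h1, hb⟩ := (psd2 _).mp hC
  rw [htr, hdet, trace2, det2, hs]
  set C := L * A * Lᴴ with hCdef
  constructor
  · linarith
  · nlinarith [sq_nonneg (C 0 0 - C 1 1), sq_nonneg (C 0 1)]

/-- `2√(det A)·√(det B) ≤ tr(BA)` for PSD `A B`. -/
lemma frob_ge (A B : Matrix (Fin 2) (Fin 2) ℝ) (hA : A.PosSemidef) (hB : B.PosSemidef) :
    2 * Real.sqrt A.det * Real.sqrt B.det ≤ frob B A := by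
  obtain ⟨h1, h2⟩ := frob_key A B hA hB
  have h3 : 2 * Real.sqrt A.det * Real.sqrt B.det = Real.sqrt (4 * (A.det * B.det)) := by
    rw [show (4:ℝ) * (A.det * B.det) = 2^2 * (A.det * B.det) by ring, Real.sqrt_mul (by positivity),
      Real.sqrt_sq (by norm_num : (0:ℝ) ≤ 2), Real.sqrt_mul (det_nonneg2 hA), mul_assoc]
  rw [h3]
  calc Real.sqrt (4 * (A.det * B.det)) ≤ Real.sqrt ((frob B A)^2) := Real.sqrt_le_sqrt h2
    _ = frob B A := Real.sqrt_sq h1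

lemma mem_S1 {B : Matrix (Fin 2) (Fin 2) ℝ} (h : B ∈ S1) :
    B 1 0 = B 0 1 ∧ 0 ≤ B 0 0 ∧ 0 ≤ B 1 1 ∧ B 0 1 ^ 2 ≤ B 0 0 * B 1 1 ∧
      B 0 0 + B 1 1 = 1 ∧ 0 ≤ B.det ∧ B.det ≤ 1/4 := by
  obtain ⟨hpsd, htr⟩ := h
  obtain ⟨hs, h0, h1, hb⟩ := (psd2 _).mp hpsd
  rw [trace2] at htr
  refine ⟨hs, h0, h1, hb, htr, ?_, ?_⟩
  · rw [det2, hs]; nlinarith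
  · rw [det2, hs]; nlinarith [sq_nonneg (B 0 0 - B 1 1), sq_nonneg (B 0 1)]

lemma E1_mem : (!![(1:ℝ), 0; 0, 0]) ∈ S1 := by
  constructor
  · rw [psd2]; norm_num
  · rw [trace2]; norm_num

lemma E2_mem : (!![(0:ℝ), 0; 0, 1]) ∈ S1 := by
  constructor
  · rw [psd2]; norm_num
  · rw [trace2]; norm_num

lemma half_mem : ((1/2 : ℝ) • (1 : Matrix (Fin 2) (Fin 2) ℝ)) ∈ S1 := by
  constructor
  · rw [psd2]; norm_num [Matrix.smul_apply, Matrix.one_apply]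
  · rw [trace2]; norm_num [Matrix.smul_apply, Matrix.one_apply]

lemma sqrt_le_half {x : ℝ} (h : x ≤ 1/4) : Real.sqrt x ≤ 1/2 := by
  calc Real.sqrt x ≤ Real.sqrt (1/4) := Real.sqrt_le_sqrt h
    _ = 1/2 := by
        rw [show (1/4 : ℝ) = (1/2)^2 by norm_num, Real.sqrt_sq (by norm_num : (0:ℝ) ≤ 1/2)]

lemma bdd_term (x y : ℝ) (h1 : |x| ≤ 1) : -(x * y) ≤ |y| := by
  calc -(x * y) ≤ |x * y| := neg_le_abs _
    _ = |x| * |y| := abs_mul _ _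
    _ ≤ 1 * |y| := mul_le_mul_of_nonneg_right h1 (abs_nonneg y)
    _ = |y| := one_mul _

lemma S1_bdd (A : Matrix (Fin 2) (Fin 2) ℝ) {f : ℝ} (hf : 0 ≤ f) :
    ∀ y ∈ (fun B => -frob B A + f * Real.sqrt B.det) '' S1,
      y ≤ |A 0 0| + |A 0 1| + |A 1 0| + |A 1 1| + f := by
  rintro y ⟨B, hB, rfl⟩
  show -frob B A + f * Real.sqrt B.det ≤ _
  obtain ⟨hs, h0, h1, hb, htr, hd0, hd4⟩ := mem_S1 hB
  have h00 : |B 0 0| ≤ 1 := by rw [abs_of_nonneg h0]; linarith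
  have h11 : |B 1 1| ≤ 1 := by rw [abs_of_nonneg h1]; linarith
  have h01 : |B 0 1| ≤ 1 := by
    have h2 : B 0 1 ^ 2 ≤ 1 := by nlinarith
    rw [← Real.sqrt_sq_eq_abs]
    calc Real.sqrt (B 0 1 ^ 2) ≤ Real.sqrt 1 := Real.sqrt_le_sqrt h2
      _ = 1 := Real.sqrt_one
  have h10 : |B 1 0| ≤ 1 := by rw [hs]; exact h01
  have hfs : f * Real.sqrt B.det ≤ f := by
    calc f * Real.sqrt B.det ≤ f * (1/2) := by
          exact mul_le_mul_of_nonneg_left (sqrt_le_half hd4) hf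
      _ ≤ f := by linarith
  have hneg : -frob B A ≤ |A 0 0| + |A 0 1| + |A 1 0| + |A 1 1| := by
    rw [frob_eq]
    have t1 := bdd_term (B 0 0) (A 0 0) h00
    have t2 := bdd_term (B 0 1) (A 1 0) h01
    have t3 := bdd_term (B 1 0) (A 0 1) h10
    have t4 := bdd_term (B 1 1) (A 1 1) h11
    linarith
  linarith

set_option maxHeartbeats 2000000 in
lemma key_lemma (A : Matrix (Fin 2) (Fin 2) ℝ) (hsym : A 1 0 = A 0 1) {f : ℝ} (hf : 0 ≤ f) :
    Hop A f = 0 ↔ A.PosSemidef ∧ A.det = (f/2)^2 := by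
  set s : Set ℝ := (fun B => -frob B A + f * Real.sqrt B.det) '' S1 with hs_def
  have hHop : Hop A f = sSup s := rfl
  have hne : s.Nonempty := ⟨_, ⟨_, E1_mem, rfl⟩⟩
  have hbdd : BddAbove s := ⟨_, fun y hy => S1_bdd A hf y hy⟩
  constructor
  · intro h0
    rw [hHop] at h0
    have hval : ∀ B ∈ S1, -frob B A + f * Real.sqrt B.det ≤ 0 := by
      intro B hB
      have := le_csSup hbdd (Set.mem_image_of_mem _ hB)
      rwa [h0] at this
    -- nonnegativity of diagonal entries
    have hE1 : frob !![(1:ℝ), 0; 0, 0] A = A 0 0 := by rw [frob_eq]; norm_num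
    have hE1d : (!![(1:ℝ), 0; 0, 0]).det = 0 := by rw [det2]; norm_num
    have ha : 0 ≤ A 0 0 := by
      have := hval _ E1_mem
      rw [hE1, hE1d, Real.sqrt_zero] at this; linarith
    have hE2 : frob !![(0:ℝ), 0; 0, 1] A = A 1 1 := by rw [frob_eq]; norm_num
    have hE2d : (!![(0:ℝ), 0; 0, 1]).det = 0 := by rw [det2]; norm_num
    have hc : 0 ≤ A 1 1 := by
      have := hval _ E2_mem
      rw [hE2, hE2d, Real.sqrt_zero] at this; linarith
    -- positive semidefiniteness via the quadratic
    have hquad : ∀ t : ℝ, 0 ≤ A 0 0 * (t * t) + (2 * A 0 1) * t + A 1 1 := by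
      intro t
      have hpos : (0:ℝ) < t^2 + 1 := by positivity
      set Bt : Matrix (Fin 2) (Fin 2) ℝ := (t^2+1)⁻¹ • !![t^2, t; t, 1] with hBt
      have hBt00 : Bt 0 0 = (t^2+1)⁻¹ * t^2 := by rw [hBt]; simp
      have hBt01 : Bt 0 1 = (t^2+1)⁻¹ * t := by rw [hBt]; simp
      have hBt10 : Bt 1 0 = (t^2+1)⁻¹ * t := by rw [hBt]; simp
      have hBt11 : Bt 1 1 = (t^2+1)⁻¹ * 1 := by rw [hBt]; simp
      have hmem : Bt ∈ S1 := by
        constructor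
        · rw [psd2, hBt00, hBt01, hBt10, hBt11]
          refine ⟨rfl, by positivity, by positivity, le_of_eq (by ring)⟩
        · rw [trace2, hBt00, hBt11]; field_simp
      have hdet : Bt.det = 0 := by
        rw [det2, hBt00, hBt01, hBt10, hBt11]; ring
      have := hval _ hmem
      rw [hdet, Real.sqrt_zero, frob_eq, hBt00, hBt01, hBt10, hBt11, hsym] at this
      have h2 : 0 ≤ (t^2+1)⁻¹ * (A 0 0 * (t*t) + (2 * A 0 1) * t + A 1 1) := by
        nlinarith [this]
      have h3 := mul_nonneg (le_of_lt hpos) h2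
      have h4 : (t^2+1) * ((t^2+1)⁻¹ * (A 0 0 * (t*t) + (2 * A 0 1) * t + A 1 1))
          = A 0 0 * (t*t) + (2 * A 0 1) * t + A 1 1 := by field_simp
      rw [h4] at h3
      exact h3
    have hb2 : A 0 1 ^ 2 ≤ A 0 0 * A 1 1 := by
      have := discrim_le_zero hquad
      simp only [discrim] at this
      nlinarith [this]
    have hA : A.PosSemidef := (psd2 _).mpr ⟨hsym, ha, hc, hb2⟩
    refine ⟨hA, ?_⟩
    have hdet_nn : 0 ≤ A.det := det_nonneg2 hA
    rcases eq_or_lt_of_le (add_nonneg ha hc) with ht0 | htpos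
    · -- trace zero : A = 0, show f = 0
      have ha0 : A 0 0 = 0 := by linarith
      have hc0 : A 1 1 = 0 := by linarith
      have hb0 : A 0 1 = 0 := by nlinarith [sq_nonneg (A 0 1)]
      have hAdet : A.det = 0 := by rw [det2, hsym, ha0, hb0]; ring
      have hvh := hval _ half_mem
      have hfrobh : frob ((1/2 : ℝ) • (1 : Matrix (Fin 2) (Fin 2) ℝ)) A = 0 := by
        rw [frob_eq]
        simp [Matrix.smul_apply, Matrix.one_apply, ha0, hc0, hb0, hsym]
      have hdeth : ((1/2 : ℝ) • (1 : Matrix (Fin 2) (Fin 2) ℝ)).det = 1/4 := by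
        rw [det2]
        simp [Matrix.smul_apply, Matrix.one_apply]
        norm_num
      rw [hfrobh, hdeth] at hvh
      have hsq : Real.sqrt (1/4 : ℝ) = 1/2 := by
        rw [show (1/4 : ℝ) = (1/2)^2 by norm_num, Real.sqrt_sq (by norm_num : (0:ℝ) ≤ 1/2)]
      rw [hsq] at hvh
      have hf0 : f = 0 := by linarith
      rw [hAdet, hf0]; norm_num
    · -- positive trace
      set T : ℝ := A 0 0 + A 1 1 with hT
      -- the adjugate family : for δ ≥ 0
      have hadj : ∀ δ : ℝ, 0 ≤ δ →
          f * Real.sqrt (A.det + δ * T + δ^2) ≤ 2 * A.det + δ * T := by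
        intro δ hδ
        have hTd : (0:ℝ) < T + 2*δ := by linarith
        set Bd : Matrix (Fin 2) (Fin 2) ℝ :=
          (T + 2*δ)⁻¹ • !![A 1 1 + δ, -(A 0 1); -(A 0 1), A 0 0 + δ] with hBd
        have h00 : Bd 0 0 = (T + 2*δ)⁻¹ * (A 1 1 + δ) := by rw [hBd]; simp
        have h01 : Bd 0 1 = (T + 2*δ)⁻¹ * (-(A 0 1)) := by rw [hBd]; simp
        have h10 : Bd 1 0 = (T + 2*δ)⁻¹ * (-(A 0 1)) := by rw [hBd]; simp
        have h11 : Bd 1 1 = (T + 2*δ)⁻¹ * (A 0 0 + δ) := by rw [hBd]; simp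
        have hinv : (0:ℝ) < (T + 2*δ)⁻¹ := inv_pos.mpr hTd
        have hmem : Bd ∈ S1 := by
          constructor
          · rw [psd2, h00, h01, h10, h11]
            refine ⟨rfl, by positivity, by positivity, ?_⟩
            have hkey : A 0 1 ^ 2 ≤ (A 1 1 + δ) * (A 0 0 + δ) := by nlinarith
            calc ((T + 2*δ)⁻¹ * (-(A 0 1)))^2 = (T + 2*δ)⁻¹^2 * (A 0 1)^2 := by ring
              _ ≤ (T + 2*δ)⁻¹^2 * ((A 1 1 + δ) * (A 0 0 + δ)) :=
                  mul_le_mul_of_nonneg_left hkey (sq_nonneg _)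
              _ = ((T + 2*δ)⁻¹ * (A 1 1 + δ)) * ((T + 2*δ)⁻¹ * (A 0 0 + δ)) := by ring
          · rw [trace2, h00, h11]
            field_simp
            ring
        have hdetB : Bd.det = (T + 2*δ)⁻¹^2 * (A.det + δ * T + δ^2) := by
          rw [det2, h00, h01, h10, h11, det2, hsym]
          ring
        have hfrobB : frob Bd A = (T + 2*δ)⁻¹ * (2 * A.det + δ * T) := by
          rw [frob_eq, h00, h01, h10, h11, det2, hsym]
          ring
        have := hval _ hmem
        rw [hfrobB, hdetB] at this
        have hsqrt : Real.sqrt ((T + 2*δ)⁻¹^2 * (A.det + δ * T + δ^2))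
            = (T + 2*δ)⁻¹ * Real.sqrt (A.det + δ * T + δ^2) := by
          rw [Real.sqrt_mul (sq_nonneg _), Real.sqrt_sq (le_of_lt hinv)]
        rw [hsqrt] at this
        have h2 : (T + 2*δ)⁻¹ * (f * Real.sqrt (A.det + δ * T + δ^2) - (2 * A.det + δ * T)) ≤ 0 := by
          nlinarith [this]
        by_contra hcon'
        push_neg at hcon'
        have h3 : 0 < (T + 2*δ)⁻¹ * (f * Real.sqrt (A.det + δ * T + δ^2) - (2 * A.det + δ * T)) :=
          mul_pos hinv (by linarith)
        linarith
      -- first : f^2/4 ≤ det A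
      have hge : (f/2)^2 ≤ A.det := by
        rcases eq_or_lt_of_le hdet_nn with hd0 | hdpos
        · -- det = 0 : show f = 0
          rcases eq_or_lt_of_le hf with hf0 | hfpos
          · rw [← hf0]; norm_num; linarith [hdet_nn]
          · exfalso
            set δ := f^2 / (2 * T) with hδ
            have hδpos : 0 < δ := by positivity
            have h := hadj δ (le_of_lt hδpos)
            rw [← hd0] at h
            have hsq' : (0:ℝ) + δ * T + δ^2 = δ * (T + δ) := by ring
            rw [hsq'] at h
            have harg : (0:ℝ) ≤ δ * (T + δ) := by positivity
            have h3 : f * Real.sqrt (δ * (T + δ)) ≤ δ * T := by linarith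
            have h2 : f^2 * (δ * (T + δ)) ≤ (δ * T)^2 := by
              have hL : 0 ≤ f * Real.sqrt (δ * (T + δ)) := by positivity
              nlinarith [Real.sq_sqrt harg, h3, hL]
            -- f² δ (T+δ) ≤ δ² T² ⟹ f² (T+δ) ≤ δ T²
            have h4 : f^2 * (T + δ) ≤ δ * T^2 := by
              have := mul_le_mul_of_nonneg_left h2 (le_of_lt (inv_pos.mpr hδpos))
              calc f^2 * (T + δ) = δ⁻¹ * (f^2 * (δ * (T + δ))) := by field_simp
                _ ≤ δ⁻¹ * (δ * T)^2 := this
                _ = δ * T^2 := by field_simp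
            rw [hδ] at h4
            have : f^2 * T ≤ f^2 * T / 2 := by
              have hT2 : (0:ℝ) < 2 * T := by linarith
              calc f^2 * T ≤ f^2 * (T + f^2/(2*T)) := by nlinarith
                _ ≤ (f^2/(2*T)) * T^2 := h4
                _ = f^2 * T / 2 := by field_simp
            nlinarith [mul_pos (mul_pos hfpos hfpos) htpos]
        · -- det > 0
          have h := hadj 0 le_rfl
          have e0 : A.det + 0 * T + 0^2 = A.det := by ring
          rw [e0] at h
          have hsd : 0 < Real.sqrt A.det := Real.sqrt_pos.mpr hdpos
          have h2 : f ≤ 2 * Real.sqrt A.det := by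
            have h3 : f * Real.sqrt A.det ≤ 2 * A.det := by linarith
            have h4 : 2 * A.det = 2 * Real.sqrt A.det * Real.sqrt A.det := by
              nlinarith [Real.sq_sqrt (le_of_lt hdpos)]
            rw [h4] at h3
            exact le_of_mul_le_mul_right (by linarith) hsd
          nlinarith [Real.sq_sqrt (le_of_lt hdpos)]
      -- second : det A ≤ f^2/4
      have hle : A.det ≤ (f/2)^2 := by
        by_contra hcon
        push_neg at hcon
        -- A is positive definite ; get uniform negative bound
        have hdpos : 0 < A.det := lt_of_le_of_lt (by positivity) hcon
        set μ : ℝ := A.det / T with hμ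
        have hμpos : 0 < μ := div_pos hdpos htpos
        -- frob lower bound : μ ≤ frob B A for B ∈ S1
        have hfrob_lb : ∀ B ∈ S1, μ ≤ frob B A := by
          intro B hB
          obtain ⟨hbs, hb0, hb1, hbb, hbtr, _, _⟩ := mem_S1 hB
          set A' : Matrix (Fin 2) (Fin 2) ℝ := A - μ • 1 with hA'
          have e00 : A' 0 0 = A 0 0 - μ := by rw [hA']; simp
          have e01 : A' 0 1 = A 0 1 := by rw [hA']; simp [Matrix.one_apply]
          have e10 : A' 1 0 = A 1 0 := by rw [hA']; simp [Matrix.one_apply]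
          have e11 : A' 1 1 = A 1 1 - μ := by rw [hA']; simp
          have hμT : μ * T = A.det := by rw [hμ]; field_simp
          have hdet2 : A.det = A 0 0 * A 1 1 - A 0 1 ^ 2 := by rw [det2, hsym]; ring
          have hA'psd : A'.PosSemidef := by
            rw [psd2, e00, e01, e10, e11, hsym]
            refine ⟨rfl, ?_, ?_, ?_⟩
            · nlinarith [sq_nonneg (A 0 0), sq_nonneg (A 0 1)]
            · nlinarith [sq_nonneg (A 1 1), sq_nonneg (A 0 1)]
            · nlinarith [sq_nonneg μ]
          have hfr := (frob_key A' B hA'psd hB.1).1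
          have hexp : frob B A' = frob B A - μ := by
            rw [frob_eq, frob_eq, e00, e01, e10, e11]
            have : B 0 0 * (A 0 0 - μ) + B 0 1 * A 1 0 + B 1 0 * A 0 1 + B 1 1 * (A 1 1 - μ)
                = B 0 0 * A 0 0 + B 0 1 * A 1 0 + B 1 0 * A 0 1 + B 1 1 * A 1 1
                  - μ * (B 0 0 + B 1 1) := by ring
            rw [this, hbtr]; ring
          rw [hexp] at hfr
          linarith
        -- f < 2√det
        have hfd : f < 2 * Real.sqrt A.det := by
          have h1 : f^2 < 4 * A.det := by nlinarith
          have h2 : (2 * Real.sqrt A.det)^2 = 4 * A.det := by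
            nlinarith [Real.sq_sqrt (le_of_lt hdpos)]
          nlinarith [Real.sqrt_nonneg A.det]
        set δ0 : ℝ := μ / (2 * (f + 1)) with hδ0
        have hδ0pos : 0 < δ0 := by positivity
        set c : ℝ := max ((f - 2 * Real.sqrt A.det) * δ0) (-μ/2) with hc
        have hcneg : c < 0 := by
          rw [hc]
          apply max_lt
          · nlinarith
          · linarith
        have hub : ∀ y ∈ s, y ≤ c := by
          rintro y ⟨B, hB, rfl⟩
          show -frob B A + f * Real.sqrt B.det ≤ c
          rcases le_or_gt δ0 (Real.sqrt B.det) with hd | hd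
          · have h1 := frob_ge A B hA hB.1
            have h2 : -frob B A + f * Real.sqrt B.det
                ≤ (f - 2 * Real.sqrt A.det) * Real.sqrt B.det := by nlinarith
            calc -frob B A + f * Real.sqrt B.det
                ≤ (f - 2 * Real.sqrt A.det) * Real.sqrt B.det := h2
              _ ≤ (f - 2 * Real.sqrt A.det) * δ0 := by nlinarith
              _ ≤ c := le_max_left _ _
          · have h1 := hfrob_lb B hB
            have h2 : f * Real.sqrt B.det ≤ f * δ0 := by
              apply mul_le_mul_of_nonneg_left (le_of_lt hd) hf
            have h3 : f * δ0 ≤ μ/2 := by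
              rw [hδ0, ← mul_div_assoc]
              rw [div_le_div_iff₀ (by positivity : (0:ℝ) < 2 * (f + 1)) (by norm_num : (0:ℝ) < 2)]
              nlinarith [hμpos.le]
            calc -frob B A + f * Real.sqrt B.det ≤ -μ + μ/2 := by linarith
              _ = -μ/2 := by ring
              _ ≤ c := le_max_right _ _
        have := csSup_le hne hub
        rw [h0] at this
        linarith
      linarith
  · rintro ⟨hA, hdet⟩
    have hsd : Real.sqrt A.det = f / 2 := by
      rw [hdet, Real.sqrt_sq (by linarith : (0:ℝ) ≤ f/2)]
    have hub : ∀ y ∈ s, y ≤ 0 := by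
      rintro y ⟨B, hB, rfl⟩
      show -frob B A + f * Real.sqrt B.det ≤ 0
      have h1 := frob_ge A B hA hB.1
      rw [hsd] at h1
      nlinarith [Real.sqrt_nonneg B.det]
    have hmem0 : (0:ℝ) ∈ s := by
      obtain ⟨hs', ha, hc, hb2⟩ := (psd2 _).mp hA
      rcases eq_or_lt_of_le (add_nonneg ha hc) with ht0 | htpos
      · -- A = 0 and f = 0
        have ha0 : A 0 0 = 0 := by linarith
        have hc0 : A 1 1 = 0 := by linarith
        refine ⟨_, E1_mem, ?_⟩
        have hE1 : frob !![(1:ℝ), 0; 0, 0] A = A 0 0 := by rw [frob_eq]; norm_num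
        have hE1d : (!![(1:ℝ), 0; 0, 0]).det = 0 := by rw [det2]; norm_num
        show -frob !![(1:ℝ), 0; 0, 0] A + f * Real.sqrt (!![(1:ℝ), 0; 0, 0]).det = 0
        rw [hE1, hE1d, Real.sqrt_zero, ha0]; ring
      · set T : ℝ := A 0 0 + A 1 1 with hT
        set Bs : Matrix (Fin 2) (Fin 2) ℝ :=
          T⁻¹ • !![A 1 1, -(A 0 1); -(A 0 1), A 0 0] with hBs
        have hinv : (0:ℝ) < T⁻¹ := inv_pos.mpr htpos
        have h00 : Bs 0 0 = T⁻¹ * A 1 1 := by rw [hBs]; simp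
        have h01 : Bs 0 1 = T⁻¹ * (-(A 0 1)) := by rw [hBs]; simp
        have h10 : Bs 1 0 = T⁻¹ * (-(A 0 1)) := by rw [hBs]; simp
        have h11 : Bs 1 1 = T⁻¹ * A 0 0 := by rw [hBs]; simp
        have hmem : Bs ∈ S1 := by
          constructor
          · rw [psd2, h00, h01, h10, h11]
            refine ⟨rfl, by positivity, by positivity, ?_⟩
            nlinarith [mul_nonneg (le_of_lt hinv) (le_of_lt hinv), hb2]
          · rw [trace2, h00, h11]; field_simp; ring
        have hdetB : Bs.det = T⁻¹^2 * A.det := by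
          rw [det2, h00, h01, h10, h11, det2, hsym]; ring
        have hfrobB : frob Bs A = T⁻¹ * (2 * A.det) := by
          rw [frob_eq, h00, h01, h10, h11, det2, hsym]; ring
        refine ⟨_, hmem, ?_⟩
        show -frob Bs A + f * Real.sqrt Bs.det = 0
        rw [hfrobB, hdetB, Real.sqrt_mul (sq_nonneg _), Real.sqrt_sq (le_of_lt hinv), hsd]
        have : A.det = (f/2)^2 := hdet
        rw [this]; ring
    rw [hHop]
    exact le_antisymm (csSup_le hne hub) (le_csSup hbdd hmem0)


lemma hess_symm (Ω : Set (Fin 2 → ℝ)) (hΩ : IsOpen Ω) (u : (Fin 2 → ℝ) → ℝ)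
    (hu : ContDiffOn ℝ 2 u Ω) {x : Fin 2 → ℝ} (hx : x ∈ Ω) :
    HessWithin u Ω x 1 0 = HessWithin u Ω x 0 1 := by
  have heq : ∀ i j : Fin 2, HessWithin u Ω x i j
      = fderiv ℝ (fderiv ℝ u) x (Pi.single i 1) (Pi.single j 1) := by
    intro i j
    show iteratedFDerivWithin ℝ 2 u Ω x ![Pi.single i 1, Pi.single j 1] = _
    rw [iteratedFDerivWithin_of_isOpen 2 hΩ hx, iteratedFDeriv_two_apply]
    simp
  have hsymm : IsSymmSndFDerivAt ℝ u x :=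
    (hu.contDiffAt (hΩ.mem_nhds hx)).isSymmSndFDerivAt (by simp)
  rw [heq, heq, hsymm]

theorem stmt12 (Ω : Set (Fin 2 → ℝ)) (hΩ : IsOpen Ω)
    (u f : (Fin 2 → ℝ) → ℝ) (hu : ContDiffOn ℝ 2 u Ω)
    (hf : ∀ x ∈ Ω, 0 ≤ f x) :
    (∀ x ∈ Ω, Hop (HessWithin u Ω x) (f x) = 0) ↔
      (∀ x ∈ Ω, (HessWithin u Ω x).PosSemidef ∧
        (HessWithin u Ω x).det = (f x / 2) ^ 2) := by
  constructor
  · intro h x hx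
    exact (key_lemma _ (hess_symm Ω hΩ u hu hx) (hf x hx)).mp (h x hx)
  · intro h x hx
    exact (key_lemma _ (hess_symm Ω hΩ u hu hx) (hf x hx)).mpr (h x hx)

end
end
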